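/- For every c > 0, ∫_{−∞}^{∞} (c + z²)^{−2} e^{−z²/2} dz = √(π/2)/c + (π(1−c)/(2c^{3/2})) e^{c/2} erfc(√(c/2)), where erfc(x) = (2/√π)∫_x^∞ e^{−r²} dr. -/

import Mathlib

set_option maxHeartbeats 1000000
open Real MeasureTheory Set Filter

lemma lemA {b : ℝ} (hb : 0 < b) : ∫ t in Ioi 0, t * Real.exp (-(b*t)) = 1/b^2 := by
  have h := Real.integral_rpow_mul_exp_neg_mul_Ioi (a := 2) (r := b) (by norm_num) hb
  simp only [show (2:ℝ) - 1 = 1 by norm_num, Real.rpow_one] at h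
  rw [h, Real.Gamma_two, mul_one, Real.rpow_two, div_pow, one_pow]

-- integrability of t * exp (-(b*t)) on Ioi 0
lemma lemAint {b : ℝ} (hb : 0 < b) : IntegrableOn (fun t => t * Real.exp (-(b*t))) (Ioi 0) := by
  have h := integrableOn_rpow_mul_exp_neg_mul_rpow (s := 1) (p := 1) (b := b) (by norm_num) (by norm_num) hb
  refine h.congr_fun (fun x hx => ?_) measurableSet_Ioi
  simp [Real.rpow_one, neg_mul]

lemma hintz {c : ℝ} (hc : 0 < c) :
    Integrable (fun z : ℝ => Real.exp (-z^2/2)/(c+z^2)^2) := by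
  apply Integrable.mono' ((integrable_exp_neg_mul_sq (b := 1/2) (by norm_num)).const_mul (c⁻¹^2))
  · apply Continuous.aestronglyMeasurable
    apply Continuous.div (by continuity) (by continuity)
    intro z; positivity
  · refine ae_of_all _ (fun z => ?_)
    have h1 : (0:ℝ) < c + z^2 := by positivity
    have h2 : (c:ℝ)^2 ≤ (c+z^2)^2 := by nlinarith [sq_nonneg z]
    rw [Real.norm_eq_abs, abs_of_nonneg (by positivity)]
    calc Real.exp (-z^2/2)/(c+z^2)^2 ≤ Real.exp (-z^2/2)/c^2 := by
          apply div_le_div_of_nonneg_left (by positivity) (by positivity) h2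
      _ = c⁻¹^2 * Real.exp (-(1/2)*z^2) := by rw [neg_div]; ring_nf

lemma step1 {c : ℝ} (hc : 0 < c) :
    ∫ z : ℝ, Real.exp (-z ^ 2 / 2) / (c + z ^ 2) ^ 2 =
      ∫ t in Ioi (0:ℝ), t * Real.exp (-(c*t)) * Real.sqrt (π/(t+1/2)) := by
  have key : ∀ z : ℝ, (∫ t in Ioi (0:ℝ), t * Real.exp (-((c+z^2)*t)) * Real.exp (-z^2/2))
      = Real.exp (-z^2/2)/(c+z^2)^2 := by
    intro z
    have hpos : (0:ℝ) < c + z^2 := by positivity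
    rw [MeasureTheory.integral_mul_const, lemA hpos]
    field_simp
  have hmeas : AEStronglyMeasurable
      (Function.uncurry (fun z t => t * Real.exp (-((c+z^2)*t)) * Real.exp (-z^2/2) : ℝ → ℝ → ℝ))
      ((volume : Measure ℝ).prod (volume.restrict (Ioi 0))) := by
    apply Continuous.aestronglyMeasurable
    fun_prop
  have hint : Integrable
      (Function.uncurry (fun z t => t * Real.exp (-((c+z^2)*t)) * Real.exp (-z^2/2) : ℝ → ℝ → ℝ))
      ((volume : Measure ℝ).prod (volume.restrict (Ioi 0))) := by
    rw [MeasureTheory.integrable_prod_iff hmeas]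
    simp only [Function.uncurry_apply_pair]
    constructor
    · refine ae_of_all _ (fun z => ?_)
      have hpos : (0:ℝ) < c + z^2 := by positivity
      exact (lemAint hpos).mul_const _
    · have heq : ∀ z : ℝ,
          (∫ t in Ioi (0:ℝ), ‖t * Real.exp (-((c+z^2)*t)) * Real.exp (-z^2/2)‖)
          = Real.exp (-z^2/2)/(c+z^2)^2 := by
        intro z
        rw [← key z]
        refine setIntegral_congr_fun measurableSet_Ioi (fun t ht => ?_)
        rw [Real.norm_eq_abs, abs_of_nonneg]
        have := le_of_lt (show (0:ℝ) < t from ht)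
        positivity
      exact (hintz hc).congr (ae_of_all _ (fun z => (heq z).symm))
  have swap := MeasureTheory.integral_integral_swap
      (f := fun (z t : ℝ) => t * Real.exp (-((c+z^2)*t)) * Real.exp (-z^2/2)) hint
  calc ∫ z : ℝ, Real.exp (-z ^ 2 / 2) / (c + z ^ 2) ^ 2
      = ∫ z : ℝ, ∫ t in Ioi (0:ℝ), t * Real.exp (-((c+z^2)*t)) * Real.exp (-z^2/2) := by
        exact integral_congr_ae (ae_of_all _ (fun z => (key z).symm))
    _ = ∫ t in Ioi (0:ℝ), ∫ z : ℝ, t * Real.exp (-((c+z^2)*t)) * Real.exp (-z^2/2) := swap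
    _ = ∫ t in Ioi (0:ℝ), t * Real.exp (-(c*t)) * Real.sqrt (π/(t+1/2)) := by
        refine setIntegral_congr_fun measurableSet_Ioi (fun t ht => ?_)
        have h1 : ∀ z : ℝ, t * Real.exp (-((c+z^2)*t)) * Real.exp (-z^2/2)
            = (t * Real.exp (-(c*t))) * Real.exp (-(t+1/2)*z^2) := by
          intro z
          rw [mul_assoc, ← Real.exp_add, mul_assoc, ← Real.exp_add]
          ring_nf
        rw [integral_congr_ae (ae_of_all _ h1), MeasureTheory.integral_const_mul,
          integral_gaussian]

lemma image_Ioi : (fun x : ℝ => (x^2-1)/2) '' Ioi 1 = Ioi 0 := by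
  ext y
  constructor
  · rintro ⟨x, hx, rfl⟩
    have hx1 : (1:ℝ) < x := hx
    have : (1:ℝ) < x^2 := by nlinarith
    simp only [mem_Ioi]
    linarith
  · intro hy
    have hy' : (0:ℝ) < y := hy
    refine ⟨Real.sqrt (2*y+1), ?_, ?_⟩
    · have h1 : Real.sqrt 1 < Real.sqrt (2*y+1) :=
        Real.sqrt_lt_sqrt (by norm_num) (by linarith)
      simpa using h1
    · show (Real.sqrt (2*y+1)^2 - 1)/2 = y
      rw [Real.sq_sqrt (by linarith)]
      ring

lemma step2 {c : ℝ} (hc : 0 < c) :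
    (∫ t in Ioi (0:ℝ), t * Real.exp (-(c*t)) * Real.sqrt (π/(t+1/2))) =
      (Real.sqrt (2*π)/2 * Real.exp (c/2)) *
        ∫ x in Ioi (1:ℝ), (x^2-1) * Real.exp (-(c/2)*x^2) := by
  have hderiv : ∀ x ∈ Ioi (1:ℝ),
      HasDerivWithinAt (fun x : ℝ => (x^2-1)/2) x (Ioi 1) x := by
    intro x _
    have h := ((hasDerivAt_pow 2 x).sub_const 1).div_const 2
    norm_num at h
    exact h.hasDerivWithinAt
  have hinj : InjOn (fun x : ℝ => (x^2-1)/2) (Ioi 1) := by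
    intro a ha b hb h
    simp only [mem_Ioi] at ha hb
    have h2 : (a-b)*(a+b) = 0 := by simp only at h; nlinarith
    rcases mul_eq_zero.1 h2 with h3 | h3
    · linarith
    · linarith
  have := MeasureTheory.integral_image_eq_integral_abs_deriv_smul (f' := fun x : ℝ => x)
    measurableSet_Ioi hderiv hinj
    (fun t => t * Real.exp (-(c*t)) * Real.sqrt (π/(t+1/2)))
  rw [image_Ioi] at this
  rw [this, ← MeasureTheory.integral_const_mul]
  refine setIntegral_congr_fun measurableSet_Ioi (fun x hx => ?_)
  have hx1 : (1:ℝ) < x := hx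
  have hx0 : (0:ℝ) < x := by linarith
  simp only [smul_eq_mul, abs_of_pos hx0]
  have e1 : (x^2-1)/2 + 1/2 = x^2/2 := by ring
  have e2 : Real.sqrt (π/(x^2/2)) = Real.sqrt (2*π)/x := by
    rw [show π/(x^2/2) = 2*π/x^2 by ring, Real.sqrt_div (by positivity), Real.sqrt_sq hx0.le]
  have e3 : Real.exp (-(c*((x^2-1)/2))) = Real.exp (c/2) * Real.exp (-(c/2)*x^2) := by
    rw [← Real.exp_add]
    ring_nf
  rw [e1, e2, e3]
  field_simp

lemma intg1 {c : ℝ} (hc : 0 < c) :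
    IntegrableOn (fun x : ℝ => Real.exp (-(c/2)*x^2)) (Ioi 1) :=
  (integrable_exp_neg_mul_sq (by positivity : (0:ℝ) < c/2)).integrableOn

lemma intg2 {c : ℝ} (hc : 0 < c) :
    IntegrableOn (fun x : ℝ => x^2 * Real.exp (-(c/2)*x^2)) (Ioi 1) := by
  have h := (integrable_rpow_mul_exp_neg_mul_sq (by positivity : (0:ℝ) < c/2)
    (by norm_num : (-1:ℝ) < 2)).integrableOn (s := Ioi 1)
  refine h.congr_fun (fun x _ => ?_) measurableSet_Ioi
  simp [Real.rpow_two]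

lemma tendstoF {c : ℝ} (hc : 0 < c) :
    Filter.Tendsto (fun x : ℝ => -(x/c) * Real.exp (-(c/2)*x^2)) atTop (nhds 0) := by
  have hg : Filter.Tendsto (fun x : ℝ => (2/c^2) * (((c/2)*x)^1 * Real.exp (-((c/2)*x))))
      atTop (nhds 0) := by
    have h1 : Filter.Tendsto (fun x : ℝ => (c/2)*x) atTop atTop :=
      Filter.Tendsto.const_mul_atTop (by positivity) Filter.tendsto_id
    have h2 := (Real.tendsto_pow_mul_exp_neg_atTop_nhds_zero 1).comp h1
    simpa using h2.const_mul (2/c^2)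
  apply squeeze_zero_norm' _ hg
  filter_upwards [Filter.eventually_ge_atTop (1:ℝ)] with x hx
  have hx0 : (0:ℝ) ≤ x := by linarith
  rw [Real.norm_eq_abs, abs_mul, abs_of_nonneg (Real.exp_nonneg _), abs_neg,
    abs_of_nonneg (by positivity : (0:ℝ) ≤ x/c)]
  have hxx : x ≤ x^2 := by nlinarith
  have hexp : Real.exp (-(c/2)*x^2) ≤ Real.exp (-((c/2)*x)) := by
    apply Real.exp_le_exp.2
    rw [neg_mul, neg_le_neg_iff]
    have : (0:ℝ) < c/2 := by positivity
    nlinarith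
  calc x/c * Real.exp (-(c/2)*x^2) ≤ x/c * Real.exp (-((c/2)*x)) := by
        apply mul_le_mul_of_nonneg_left hexp (by positivity)
    _ = (2/c^2) * (((c/2)*x)^1 * Real.exp (-((c/2)*x))) := by
        field_simp

lemma step3 {c : ℝ} (hc : 0 < c) :
    (∫ x in Ioi (1:ℝ), (x^2-1) * Real.exp (-(c/2)*x^2)) =
      (1/c) * Real.exp (-(c/2)) + (1/c - 1) * ∫ x in Ioi (1:ℝ), Real.exp (-(c/2)*x^2) := by
  have hderiv : ∀ x ∈ Ici (1:ℝ), HasDerivAt (fun s : ℝ => -(s/c) * Real.exp (-(c/2)*s^2))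
      (x^2 * Real.exp (-(c/2)*x^2) - (1/c) * Real.exp (-(c/2)*x^2)) x := by
    intro x _
    have h1 : HasDerivAt (fun s : ℝ => -(c/2)*s^2) (-(c/2)*(2*x)) x := by
      have h := (hasDerivAt_pow 2 x).const_mul (-(c/2))
      refine h.congr_deriv ?_
      norm_num
    have h2 : HasDerivAt (fun s : ℝ => Real.exp (-(c/2)*s^2))
        (Real.exp (-(c/2)*x^2) * (-(c/2)*(2*x))) x := h1.exp
    have h3 : HasDerivAt (fun s : ℝ => -(s/c)) (-(1/c)) x := by
      have := (hasDerivAt_id x).div_const c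
      exact this.neg
    have h4 := h3.mul h2
    refine h4.congr_deriv ?_
    field_simp
    ring
  have hint : IntegrableOn
      (fun x : ℝ => x^2 * Real.exp (-(c/2)*x^2) - (1/c) * Real.exp (-(c/2)*x^2)) (Ioi 1) :=
    (intg2 hc).sub ((intg1 hc).const_mul _)
  have hftc := integral_Ioi_of_hasDerivAt_of_tendsto' hderiv hint (tendstoF hc)
  rw [MeasureTheory.integral_sub (intg2 hc) ((intg1 hc).const_mul _),
    MeasureTheory.integral_const_mul] at hftc
  have hF1 : (0:ℝ) - (fun s : ℝ => -(s/c) * Real.exp (-(c/2)*s^2)) 1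
      = (1/c) * Real.exp (-(c/2)) := by
    simp only
    norm_num
  rw [hF1] at hftc
  have hsub : (∫ x in Ioi (1:ℝ), (x^2-1) * Real.exp (-(c/2)*x^2))
      = (∫ x in Ioi (1:ℝ), x^2 * Real.exp (-(c/2)*x^2))
        - ∫ x in Ioi (1:ℝ), Real.exp (-(c/2)*x^2) := by
    rw [← MeasureTheory.integral_sub (intg2 hc) (intg1 hc)]
    refine setIntegral_congr_fun measurableSet_Ioi (fun x _ => ?_)
    ring
  rw [hsub]
  linear_combination hftc

lemma step4 {c : ℝ} (hc : 0 < c) :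
    (∫ x in Ioi (1:ℝ), Real.exp (-(c/2)*x^2)) =
      (Real.sqrt (c/2))⁻¹ * ∫ r in Ioi (Real.sqrt (c/2)), Real.exp (-r^2) := by
  have hb : 0 < Real.sqrt (c/2) := Real.sqrt_pos.2 (by positivity)
  have h := MeasureTheory.integral_comp_mul_left_Ioi (fun r => Real.exp (-r^2)) 1 hb
  rw [mul_one, smul_eq_mul] at h
  rw [← h]
  refine setIntegral_congr_fun measurableSet_Ioi (fun x _ => ?_)
  show Real.exp (-(c/2)*x^2) = Real.exp (-(Real.sqrt (c/2)*x)^2)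
  rw [mul_pow, Real.sq_sqrt (by positivity : (0:ℝ) ≤ c/2)]
  ring_nf

noncomputable def erfc (x : ℝ) : ℝ :=
  (2 / Real.sqrt π) * ∫ r in Set.Ioi x, Real.exp (-r ^ 2)

theorem stmt_10 (c : ℝ) (hc : 0 < c) :
    ∫ z : ℝ, Real.exp (-z ^ 2 / 2) / (c + z ^ 2) ^ 2 =
      Real.sqrt (π / 2) / c +
        (π * (1 - c) / (2 * c ^ ((3 : ℝ) / 2))) * Real.exp (c / 2) *
          erfc (Real.sqrt (c / 2)) := by
  rw [step1 hc, step2 hc, step3 hc, step4 hc, erfc]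
  set I := ∫ r in Ioi (Real.sqrt (c/2)), Real.exp (-r^2) with hI
  have hb : 0 < Real.sqrt (c/2) := Real.sqrt_pos.2 (by positivity)
  have hsp : 0 < Real.sqrt π := Real.sqrt_pos.2 Real.pi_pos
  have hsc : 0 < Real.sqrt c := Real.sqrt_pos.2 hc
  have hE : Real.exp (c/2) * Real.exp (-(c/2)) = 1 := by
    rw [← Real.exp_add]; norm_num
  have h32 : c ^ ((3:ℝ)/2) = c * Real.sqrt c := by
    rw [show (3:ℝ)/2 = 1 + 1/2 by norm_num, Real.rpow_add hc, Real.rpow_one,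
      ← Real.sqrt_eq_rpow]
  have h0 : Real.sqrt (2*π) = 2 * Real.sqrt (π/2) := by
    rw [show (2*π:ℝ) = 2^2*(π/2) by ring, Real.sqrt_mul (by positivity),
      Real.sqrt_sq (by norm_num)]
  have h1 : Real.sqrt (2*π) * Real.sqrt (c/2) = Real.sqrt π * Real.sqrt c := by
    rw [← Real.sqrt_mul (by positivity), ← Real.sqrt_mul Real.pi_pos.le]
    congr 1
    ring
  have hπ : Real.sqrt π * Real.sqrt π = π := Real.mul_self_sqrt Real.pi_pos.le
  have hcc : Real.sqrt c * Real.sqrt c = c := Real.mul_self_sqrt hc.le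
  have hbb : Real.sqrt (c/2) * Real.sqrt (c/2) = c/2 := Real.mul_self_sqrt (by positivity)
  have key1 : Real.sqrt (2*π)/2 * Real.exp (c/2) * ((1/c) * Real.exp (-(c/2)))
      = Real.sqrt (π/2)/c := by
    rw [h0, show 2*Real.sqrt (π/2)/2 * Real.exp (c/2) * ((1/c) * Real.exp (-(c/2)))
      = Real.sqrt (π/2) * (Real.exp (c/2) * Real.exp (-(c/2)))/c by ring, hE, mul_one]
  have key2 : Real.sqrt (2*π)/2 * ((1/c - 1) * (Real.sqrt (c/2))⁻¹)
      = π*(1-c)/(2*(c*Real.sqrt c)) * (2/Real.sqrt π) := by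
    have e : Real.sqrt (2*π) = (Real.sqrt π * Real.sqrt c)/Real.sqrt (c/2) := by
      rw [eq_div_iff hb.ne']
      exact h1
    have hπ2 : Real.sqrt π^2 = π := Real.sq_sqrt Real.pi_pos.le
    have h22 : Real.sqrt 2^2 = 2 := Real.sq_sqrt (by norm_num)
    have hc2 : Real.sqrt c^2 = c := Real.sq_sqrt hc.le
    rw [e]
    field_simp
    linear_combination (Real.sqrt c^2*(1 - c)) * hπ2 + (π*(1-c)) * hc2 +
      (2*π*(c-1)) * (Real.sq_sqrt (by positivity : (0:ℝ) ≤ c/2))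
  rw [h32]
  linear_combination key1 + (Real.exp (c/2) * I) * key2
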